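/- arXiv:1810.05847 — 5 statements merged into one kernel-verified Lean document; each statement's English description precedes it below -/
import Mathlib

section
/- If a Hermitian matrix H ∈ ℂ^{2N×2N} satisfies the positive real lemma inequality diag(H, I_{2n})·M + M^*·diag(H, I_{2n}) ≥ 0 where M = [[χ(A), χ(B)], [χ(C), χ(D)]], then a(H) = E_N⁻¹ · conj(H) · E_N also satisfies the same inequality; hence (H + a(H))/2 is a solution lying in the range of χ. -/
open Matrix
open scoped ComplexOrder

/-- First complex component of a quaternion `x₀ + x₁ i + x₂ j + x₃ k`, namely `x₀ + x₁ i`. -/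
noncomputable def qc1 (q : Quaternion ℝ) : ℂ := ⟨q.re, q.imI⟩

/-- Second complex component of a quaternion, namely `x₂ + x₃ i`. -/
noncomputable def qc2 (q : Quaternion ℝ) : ℂ := ⟨q.imJ, q.imK⟩

/-- The map `χ` on quaternionic matrices: `χ(M₁ + M₂ j) = [[M₁, M₂], [-conj M₂, conj M₁]]`. -/
noncomputable def chiM {p q : Type*} (M : Matrix p q (Quaternion ℝ)) :
    Matrix (p ⊕ p) (q ⊕ q) ℂ :=
  Matrix.fromBlocks (M.map qc1) (M.map qc2)
    (-((M.map qc2).map (starRingEnd ℂ))) ((M.map qc1).map (starRingEnd ℂ))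

/-- The matrix `E_k = [[0, I_k], [-I_k, 0]]`. -/
noncomputable def Emat (k : ℕ) : Matrix (Fin k ⊕ Fin k) (Fin k ⊕ Fin k) ℂ :=
  Matrix.fromBlocks 0 1 (-1) 0

/- ## Auxiliary material -/

noncomputable def Jm (p : Type*) [DecidableEq p] : Matrix (p ⊕ p) (p ⊕ p) ℂ :=
  Matrix.fromBlocks 0 1 (-1) 0

lemma Emat_eq (k : ℕ) : Emat k = Jm (Fin k) := rfl

section maps
variable {ι κ lt : Type*} [Fintype κ]

lemma mapc_mul (A : Matrix ι κ ℂ) (B : Matrix κ lt ℂ) :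
    (A * B).map (starRingEnd ℂ) = A.map (starRingEnd ℂ) * B.map (starRingEnd ℂ) := by
  ext i j; simp [Matrix.mul_apply, map_sum]

lemma mapc_add (A B : Matrix ι lt ℂ) :
    (A + B).map (starRingEnd ℂ) = A.map (starRingEnd ℂ) + B.map (starRingEnd ℂ) := by
  ext i j; simp

lemma mapc_neg (A : Matrix ι lt ℂ) :
    (-A).map (starRingEnd ℂ) = -(A.map (starRingEnd ℂ)) := by
  ext i j; simp

lemma mapc_mapc (A : Matrix ι lt ℂ) :
    (A.map (starRingEnd ℂ)).map (starRingEnd ℂ) = A := by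
  ext i j; simp

lemma conjTranspose_mapc (A : Matrix ι lt ℂ) : (A.map (starRingEnd ℂ))ᴴ = Aᵀ := by
  ext i j; simp

lemma mapc_conjTranspose (A : Matrix ι lt ℂ) : (Aᴴ).map (starRingEnd ℂ) = Aᵀ := by
  ext i j; simp

end maps

section Jlem
variable {p q : Type*} [Fintype p] [Fintype q] [DecidableEq p] [DecidableEq q]

lemma Jm_mul_Jm : Jm p * Jm p = -1 := by
  rw [show (-1 : Matrix (p ⊕ p) (p ⊕ p) ℂ) = Matrix.fromBlocks (-1) 0 0 (-1) by
    rw [← Matrix.fromBlocks_one, Matrix.fromBlocks_neg]; simp]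
  simp [Jm, Matrix.fromBlocks_multiply]

omit [Fintype p] in
lemma Jm_map_conj : (Jm p).map (starRingEnd ℂ) = Jm p := by
  ext (i | i) (j | j) <;>
    simp [Jm, Matrix.one_apply, apply_ite (starRingEnd ℂ)]

lemma Jm_inv : (Jm p)⁻¹ = -(Jm p) := by
  apply Matrix.inv_eq_right_inv
  rw [Matrix.mul_neg, Jm_mul_Jm, neg_neg]

omit [Fintype p] in
lemma Jm_conjTranspose : (Jm p)ᴴ = -(Jm p) := by
  rw [Jm, Matrix.fromBlocks_conjTranspose, Matrix.fromBlocks_neg]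
  simp

lemma chi_comm (M : Matrix p q (Quaternion ℝ)) :
    Jm p * chiM M = (chiM M).map (starRingEnd ℂ) * Jm q := by
  simp only [Jm, chiM, Matrix.fromBlocks_multiply, Matrix.fromBlocks_map,
    Matrix.map_map, Matrix.zero_mul, Matrix.mul_zero, Matrix.one_mul, Matrix.mul_one,
    Matrix.neg_mul, Matrix.mul_neg, add_zero, zero_add, neg_neg]
  ext (i|i) (j|j) <;> simp [Matrix.map_apply]

end Jlem

section key
variable {ι : Type*} [Fintype ι]

/-- The main algebraic identity. -/
lemma key_identity (F M P : Matrix ι ι ℂ)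
    (hFM : F * M = M.map (starRingEnd ℂ) * F) :
    (Fᴴ * P.map (starRingEnd ℂ) * F) * M + Mᴴ * (Fᴴ * P.map (starRingEnd ℂ) * F)
      = Fᴴ * (P * M + Mᴴ * P).map (starRingEnd ℂ) * F := by
  have h2 : Fᴴ * Mᵀ = Mᴴ * Fᴴ := by
    have := congrArg Matrix.conjTranspose hFM
    simpa [Matrix.conjTranspose_mul, conjTranspose_mapc] using this.symm
  rw [mapc_add, mapc_mul, mapc_mul, mapc_conjTranspose]
  have expand : Fᴴ * (P.map (starRingEnd ℂ) * M.map (starRingEnd ℂ)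
        + Mᵀ * P.map (starRingEnd ℂ)) * F
      = Fᴴ * P.map (starRingEnd ℂ) * (M.map (starRingEnd ℂ) * F)
        + (Fᴴ * Mᵀ) * (P.map (starRingEnd ℂ) * F) := by
    noncomm_ring
  rw [expand, ← hFM, h2]
  noncomm_ring

lemma psd_half {X : Matrix ι ι ℂ} (hX : X.PosSemidef) : ((2:ℂ)⁻¹ • X).PosSemidef := by
  have h2 : (0:ℂ) ≤ (2:ℂ)⁻¹ := by
    rw [show ((2:ℂ)⁻¹) = (((2:ℝ)⁻¹ : ℝ) : ℂ) by norm_num]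
    rw [Complex.zero_le_real]
    norm_num
  rw [Matrix.posSemidef_iff_dotProduct_mulVec]
  constructor
  · have := hX.1
    unfold Matrix.IsHermitian at *
    rw [Matrix.conjTranspose_smul, this]
    congr 1
    simp [starRingEnd_apply, star_inv₀]
  · intro x
    rw [Matrix.smul_mulVec, dotProduct_smul, smul_eq_mul]
    exact mul_nonneg h2 (hX.dotProduct_mulVec_nonneg x)

lemma psd_mapc {X : Matrix ι ι ℂ} (hX : X.PosSemidef) :
    (X.map (starRingEnd ℂ)).PosSemidef := by
  have : X.map (starRingEnd ℂ) = Xᵀ := by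
    ext i j
    simp only [Matrix.map_apply, Matrix.transpose_apply]
    rw [starRingEnd_apply, hX.1.apply j i]
  rw [this]
  exact hX.transpose

end key

lemma mapc_smul_half {ι κ : Type*} (X : Matrix ι κ ℂ) :
    (((2:ℂ)⁻¹ • X)).map (starRingEnd ℂ) = (2:ℂ)⁻¹ • X.map (starRingEnd ℂ) := by
  ext i j
  simp [Matrix.map_apply, map_inv₀, Complex.conj_ofNat]

/-- If a Hermitian `H` satisfies the positive real lemma inequality for
`M = [[χ(A), χ(B)], [χ(C), χ(D)]]`, then so does `a(H) = E_N⁻¹ conj(H) E_N`; hence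
`(H + a(H))/2` is a solution lying in the range of `χ`. -/
theorem stmt5 {N n : ℕ}
    (A : Matrix (Fin N) (Fin N) (Quaternion ℝ)) (B : Matrix (Fin N) (Fin n) (Quaternion ℝ))
    (C : Matrix (Fin n) (Fin N) (Quaternion ℝ)) (D : Matrix (Fin n) (Fin n) (Quaternion ℝ))
    (H : Matrix (Fin N ⊕ Fin N) (Fin N ⊕ Fin N) ℂ) (hH : H.IsHermitian)
    (h : ((Matrix.fromBlocks H 0 0 (1 : Matrix (Fin n ⊕ Fin n) (Fin n ⊕ Fin n) ℂ)) *
          (Matrix.fromBlocks (chiM A) (chiM B) (chiM C) (chiM D)) +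
          (Matrix.fromBlocks (chiM A) (chiM B) (chiM C) (chiM D))ᴴ *
          (Matrix.fromBlocks H 0 0 1)).PosSemidef) :
    ((Matrix.fromBlocks ((Emat N)⁻¹ * H.map (starRingEnd ℂ) * Emat N) 0 0
          (1 : Matrix (Fin n ⊕ Fin n) (Fin n ⊕ Fin n) ℂ) *
        (Matrix.fromBlocks (chiM A) (chiM B) (chiM C) (chiM D)) +
        (Matrix.fromBlocks (chiM A) (chiM B) (chiM C) (chiM D))ᴴ *
        (Matrix.fromBlocks ((Emat N)⁻¹ * H.map (starRingEnd ℂ) * Emat N) 0 0 1)).PosSemidef) ∧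
    (∃ X : Matrix (Fin N) (Fin N) (Quaternion ℝ),
      chiM X = (2 : ℂ)⁻¹ • (H + (Emat N)⁻¹ * H.map (starRingEnd ℂ) * Emat N)) ∧
    ((Matrix.fromBlocks ((2 : ℂ)⁻¹ • (H + (Emat N)⁻¹ * H.map (starRingEnd ℂ) * Emat N)) 0 0
          (1 : Matrix (Fin n ⊕ Fin n) (Fin n ⊕ Fin n) ℂ) *
        (Matrix.fromBlocks (chiM A) (chiM B) (chiM C) (chiM D)) +
        (Matrix.fromBlocks (chiM A) (chiM B) (chiM C) (chiM D))ᴴ *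
        (Matrix.fromBlocks ((2 : ℂ)⁻¹ • (H + (Emat N)⁻¹ * H.map (starRingEnd ℂ) * Emat N)) 0 0 1)
        ).PosSemidef) := by
  set J : Matrix (Fin N ⊕ Fin N) (Fin N ⊕ Fin N) ℂ := Jm (Fin N) with hJdef
  set J' : Matrix (Fin n ⊕ Fin n) (Fin n ⊕ Fin n) ℂ := Jm (Fin n) with hJ'def
  set Mb := Matrix.fromBlocks (chiM A) (chiM B) (chiM C) (chiM D) with hMbdef
  set F := Matrix.fromBlocks J 0 0 J' with hFdef
  set P := Matrix.fromBlocks H 0 0 (1 : Matrix (Fin n ⊕ Fin n) (Fin n ⊕ Fin n) ℂ) with hPdef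
  -- the commutation relation
  have hFM : F * Mb = Mb.map (starRingEnd ℂ) * F := by
    rw [hFdef, hMbdef]
    simp only [Matrix.fromBlocks_multiply, Matrix.fromBlocks_map, Matrix.zero_mul,
      Matrix.mul_zero, add_zero, zero_add]
    rw [hJdef, hJ'def, chi_comm, chi_comm, chi_comm, chi_comm]
  have hFH : Fᴴ = -F := by
    rw [hFdef, Matrix.fromBlocks_conjTranspose, Matrix.fromBlocks_neg, hJdef, hJ'def,
      Jm_conjTranspose, Jm_conjTranspose]
    simp
  -- rewrite aH block matrix
  have haH : (Emat N)⁻¹ * H.map (starRingEnd ℂ) * Emat N = -(J * H.map (starRingEnd ℂ) * J) := by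
    rw [Emat_eq, Jm_inv, ← hJdef, Matrix.neg_mul, Matrix.neg_mul]
  have hPc : P.map (starRingEnd ℂ)
      = Matrix.fromBlocks (H.map (starRingEnd ℂ)) 0 0
        (1 : Matrix (Fin n ⊕ Fin n) (Fin n ⊕ Fin n) ℂ) := by
    rw [hPdef, Matrix.fromBlocks_map, Matrix.fromBlocks_inj]
    refine ⟨rfl, by ext i j; simp, by ext i j; simp,
      by ext i j; simp [Matrix.one_apply, apply_ite (starRingEnd ℂ)]⟩
  have hP' : Matrix.fromBlocks ((Emat N)⁻¹ * H.map (starRingEnd ℂ) * Emat N) 0 0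
        (1 : Matrix (Fin n ⊕ Fin n) (Fin n ⊕ Fin n) ℂ)
      = Fᴴ * P.map (starRingEnd ℂ) * F := by
    rw [hFH, hPc, hFdef]
    simp only [Matrix.neg_mul, Matrix.fromBlocks_multiply, Matrix.zero_mul, Matrix.mul_zero,
      Matrix.mul_one, Matrix.one_mul, add_zero, zero_add, Matrix.fromBlocks_neg]
    rw [hJ'def, Jm_mul_Jm, haH]
    simp
  -- Part 1
  have part1 : (Matrix.fromBlocks ((Emat N)⁻¹ * H.map (starRingEnd ℂ) * Emat N) 0 0
        (1 : Matrix (Fin n ⊕ Fin n) (Fin n ⊕ Fin n) ℂ) * Mb +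
        Mbᴴ * Matrix.fromBlocks ((Emat N)⁻¹ * H.map (starRingEnd ℂ) * Emat N) 0 0 1).PosSemidef := by
    rw [hP', key_identity F Mb P hFM]
    exact (psd_mapc h).conjTranspose_mul_mul_same F
  refine ⟨part1, ?_, ?_⟩
  · -- Part 2 : existence of X
    set G := (2 : ℂ)⁻¹ • (H + (Emat N)⁻¹ * H.map (starRingEnd ℂ) * Emat N) with hGdef
    have hJK : J * (H + (Emat N)⁻¹ * H.map (starRingEnd ℂ) * Emat N)
        = (H + (Emat N)⁻¹ * H.map (starRingEnd ℂ) * Emat N).map (starRingEnd ℂ) * J := by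
      rw [haH, mapc_add, mapc_neg, mapc_mul, mapc_mul, hJdef, Jm_map_conj, mapc_mapc, ← hJdef]
      have hJJ : J * J = -1 := by rw [hJdef]; exact Jm_mul_Jm
      have l1 : J * (-(J * H.map (starRingEnd ℂ) * J)) = H.map (starRingEnd ℂ) * J := by
        rw [Matrix.mul_neg, ← Matrix.mul_assoc, ← Matrix.mul_assoc, hJJ]
        simp [Matrix.neg_mul]
      have l2 : (-(J * H * J)) * J = J * H := by
        rw [Matrix.neg_mul, Matrix.mul_assoc, Matrix.mul_assoc, hJJ]
        simp [Matrix.mul_neg]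
      rw [Matrix.mul_add, Matrix.add_mul, l1, l2, add_comm]
    have hJG : J * G = G.map (starRingEnd ℂ) * J := by
      rw [hGdef, mapc_smul_half, mul_smul_comm, smul_mul_assoc, hJK]
    -- block relations
    have hGb : G = Matrix.fromBlocks G.toBlocks₁₁ G.toBlocks₁₂ G.toBlocks₂₁ G.toBlocks₂₂ :=
      (Matrix.fromBlocks_toBlocks G).symm
    have hblocks : Matrix.fromBlocks G.toBlocks₂₁ G.toBlocks₂₂
          (-G.toBlocks₁₁) (-G.toBlocks₁₂)
        = Matrix.fromBlocks (-(G.toBlocks₁₂.map (starRingEnd ℂ))) (G.toBlocks₁₁.map (starRingEnd ℂ))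
          (-(G.toBlocks₂₂.map (starRingEnd ℂ))) (G.toBlocks₂₁.map (starRingEnd ℂ)) := by
      have lhs : J * G = Matrix.fromBlocks G.toBlocks₂₁ G.toBlocks₂₂
          (-G.toBlocks₁₁) (-G.toBlocks₁₂) := by
        conv_lhs => rw [hGb, hJdef]
        rw [Jm]
        simp [Matrix.fromBlocks_multiply]
      have rhs : G.map (starRingEnd ℂ) * J
          = Matrix.fromBlocks (-(G.toBlocks₁₂.map (starRingEnd ℂ)))
            (G.toBlocks₁₁.map (starRingEnd ℂ))
            (-(G.toBlocks₂₂.map (starRingEnd ℂ))) (G.toBlocks₂₁.map (starRingEnd ℂ)) := by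
        conv_lhs => rw [hGb, hJdef]
        rw [Matrix.fromBlocks_map, Jm]
        simp [Matrix.fromBlocks_multiply]
      rw [← lhs, ← rhs, hJG]
    rw [Matrix.fromBlocks_inj] at hblocks
    obtain ⟨e21, e22, _, _⟩ := hblocks
    refine ⟨Matrix.of fun i j =>
      ⟨(G.toBlocks₁₁ i j).re, (G.toBlocks₁₁ i j).im,
       (G.toBlocks₁₂ i j).re, (G.toBlocks₁₂ i j).im⟩, ?_⟩
    have hchi : chiM (Matrix.of fun i j => (⟨(G.toBlocks₁₁ i j).re, (G.toBlocks₁₁ i j).im,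
          (G.toBlocks₁₂ i j).re, (G.toBlocks₁₂ i j).im⟩ : Quaternion ℝ))
        = Matrix.fromBlocks G.toBlocks₁₁ G.toBlocks₁₂
          (-(G.toBlocks₁₂.map (starRingEnd ℂ))) (G.toBlocks₁₁.map (starRingEnd ℂ)) := rfl
    rw [hchi, ← e21, ← e22]
    exact hGb.symm
  · -- Part 3
    have hsplit : Matrix.fromBlocks
          ((2 : ℂ)⁻¹ • (H + (Emat N)⁻¹ * H.map (starRingEnd ℂ) * Emat N)) 0 0
          (1 : Matrix (Fin n ⊕ Fin n) (Fin n ⊕ Fin n) ℂ)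
        = (2 : ℂ)⁻¹ • (P + Matrix.fromBlocks
            ((Emat N)⁻¹ * H.map (starRingEnd ℂ) * Emat N) 0 0 1) := by
      rw [hPdef, Matrix.fromBlocks_add, Matrix.fromBlocks_smul, Matrix.fromBlocks_inj]
      refine ⟨rfl, by simp, by simp, ?_⟩
      ext i j
      by_cases hij : i = j <;>
        simp [Matrix.one_apply, Matrix.smul_apply, Matrix.add_apply, hij] <;> norm_num
    rw [hsplit]
    have expand : ((2 : ℂ)⁻¹ • (P + Matrix.fromBlocks
          ((Emat N)⁻¹ * H.map (starRingEnd ℂ) * Emat N) 0 0 1)) * Mb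
        + Mbᴴ * ((2 : ℂ)⁻¹ • (P + Matrix.fromBlocks
          ((Emat N)⁻¹ * H.map (starRingEnd ℂ) * Emat N) 0 0 1))
        = (2 : ℂ)⁻¹ • ((P * Mb + Mbᴴ * P)
          + (Matrix.fromBlocks ((Emat N)⁻¹ * H.map (starRingEnd ℂ) * Emat N) 0 0 1 * Mb
            + Mbᴴ * Matrix.fromBlocks ((Emat N)⁻¹ * H.map (starRingEnd ℂ) * Emat N) 0 0 1)) := by
      simp only [smul_mul_assoc, mul_smul_comm, Matrix.add_mul, Matrix.mul_add, smul_add]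
      abel
    rw [expand]
    exact psd_half (h.add part1)
end

section
/- Let (A, B, C, D) ∈ ℂ^{N×N} × ℂ^{N×n} × ℂ^{n×N} × ℂ^{n×n}, let H ∈ ℂ^{N×N} be an invertible Hermitian matrix, and write the block matrix [[Q, S], [S^*, R]] := diag(H, I_n)·[[A,B],[C,D]] + [[A,B],[C,D]]^*·diag(H, I_n), so that Q = HA + A^*H, S = HB + C^*, R = D + D^*. Then for the function φ(x) = D + C(xI - A)⁻¹B and all real x, y where the resolvents exist and x + y ≠ 0, one has φ(x) + φ(y)^* = (x+y)·[-C(xI-A)⁻¹H⁻¹(yI-A^*)⁻¹C^*] + [C(xI-A)⁻¹H⁻¹, I]·[[Q,S],[S^*,R]]·[H⁻¹(yI-A^*)⁻¹C^*; I]. -/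
open Matrix

set_option maxHeartbeats 1000000 in
/-- The positive real lemma factorization identity: with `Q = HA + A^*H`,
`S = HB + C^*`, `R = D + D^*` and `φ(x) = D + C(xI - A)⁻¹B`, for real `x, y`
where the resolvents exist and `x + y ≠ 0`,
`φ(x) + φ(y)^* = (x+y)·[-C(xI-A)⁻¹H⁻¹(yI-A^*)⁻¹C^*]
  + [C(xI-A)⁻¹H⁻¹, I]·[[Q,S],[S^*,R]]·[H⁻¹(yI-A^*)⁻¹C^*; I]`. -/
theorem stmt6 {N n : ℕ}
    (A : Matrix (Fin N) (Fin N) ℂ) (B : Matrix (Fin N) (Fin n) ℂ)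
    (C : Matrix (Fin n) (Fin N) ℂ) (D : Matrix (Fin n) (Fin n) ℂ)
    (H : Matrix (Fin N) (Fin N) ℂ) (hH : H.IsHermitian) (hHinv : IsUnit H)
    (Q S R : Matrix _ _ ℂ)
    (hQ : Q = H * A + Aᴴ * H) (hS : S = H * B + Cᴴ) (hR : R = D + Dᴴ)
    (φ : ℝ → Matrix (Fin n) (Fin n) ℂ)
    (hφ : ∀ t : ℝ, φ t = D + C * ((t : ℂ) • (1 : Matrix (Fin N) (Fin N) ℂ) - A)⁻¹ * B)
    (x y : ℝ)
    (hx : IsUnit ((x : ℂ) • (1 : Matrix (Fin N) (Fin N) ℂ) - A))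
    (hy : IsUnit ((y : ℂ) • (1 : Matrix (Fin N) (Fin N) ℂ) - Aᴴ))
    (hxy : x + y ≠ 0) :
    φ x + (φ y)ᴴ =
      ((x : ℂ) + (y : ℂ)) •
        (-(C * ((x : ℂ) • 1 - A)⁻¹ * H⁻¹ * ((y : ℂ) • 1 - Aᴴ)⁻¹ * Cᴴ)) +
      (C * ((x : ℂ) • 1 - A)⁻¹ * H⁻¹ * Q * (H⁻¹ * ((y : ℂ) • 1 - Aᴴ)⁻¹ * Cᴴ) +
       C * ((x : ℂ) • 1 - A)⁻¹ * H⁻¹ * S +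
       Sᴴ * (H⁻¹ * ((y : ℂ) • 1 - Aᴴ)⁻¹ * Cᴴ) + R) := by
  have hdx : IsUnit ((x : ℂ) • (1 : Matrix (Fin N) (Fin N) ℂ) - A).det :=
    (Matrix.isUnit_iff_isUnit_det _).mp hx
  have hdy : IsUnit ((y : ℂ) • (1 : Matrix (Fin N) (Fin N) ℂ) - Aᴴ).det :=
    (Matrix.isUnit_iff_isUnit_det _).mp hy
  have hdH : IsUnit H.det := (Matrix.isUnit_iff_isUnit_det _).mp hHinv
  set X := ((x : ℂ) • (1 : Matrix (Fin N) (Fin N) ℂ) - A)⁻¹ with hXdef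
  set Y := ((y : ℂ) • (1 : Matrix (Fin N) (Fin N) ℂ) - Aᴴ)⁻¹ with hYdef
  set G := H⁻¹ with hGdef
  have hYconj : (((y : ℂ) • (1 : Matrix (Fin N) (Fin N) ℂ) - A)⁻¹)ᴴ = Y := by
    rw [Matrix.conjTranspose_nonsing_inv, hYdef]
    congr 1
    simp [Matrix.conjTranspose_smul, Complex.star_def, Complex.conj_ofReal]
  have hX1 : X * ((x : ℂ) • (1 : Matrix (Fin N) (Fin N) ℂ) - A) = 1 :=
    Matrix.nonsing_inv_mul _ hdx
  have hY1 : ((y : ℂ) • (1 : Matrix (Fin N) (Fin N) ℂ) - Aᴴ) * Y = 1 :=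
    Matrix.mul_nonsing_inv _ hdy
  have hXA0 : X * A = (x : ℂ) • X - 1 := by
    rw [mul_sub, Matrix.mul_smul, mul_one, sub_eq_iff_eq_add] at hX1
    rw [hX1]; abel
  have hAY0 : Aᴴ * Y = (y : ℂ) • Y - 1 := by
    rw [sub_mul, Matrix.smul_mul, one_mul, sub_eq_iff_eq_add] at hY1
    rw [hY1]; abel
  have hXA : ∀ (m : ℕ) (Z : Matrix (Fin N) (Fin m) ℂ),
      X * (A * Z) = (x : ℂ) • (X * Z) - Z := by
    intro m Z
    rw [← Matrix.mul_assoc, hXA0, Matrix.sub_mul, Matrix.smul_mul, Matrix.one_mul]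
  have hAY : ∀ (m : ℕ) (Z : Matrix (Fin N) (Fin m) ℂ),
      Aᴴ * (Y * Z) = (y : ℂ) • (Y * Z) - Z := by
    intro m Z
    rw [← Matrix.mul_assoc, hAY0, Matrix.sub_mul, Matrix.smul_mul, Matrix.one_mul]
  have hGH : ∀ (m : ℕ) (Z : Matrix (Fin N) (Fin m) ℂ), G * (H * Z) = Z := by
    intro m Z
    rw [← Matrix.mul_assoc, Matrix.nonsing_inv_mul _ hdH, Matrix.one_mul]
  have hHG : ∀ (m : ℕ) (Z : Matrix (Fin N) (Fin m) ℂ), H * (G * Z) = Z := by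
    intro m Z
    rw [← Matrix.mul_assoc, Matrix.mul_nonsing_inv _ hdH, Matrix.one_mul]
  rw [hφ, hφ, hQ, hS, hR, ← hXdef]
  simp only [Matrix.conjTranspose_add, Matrix.conjTranspose_mul, hYconj, hH.eq,
    Matrix.conjTranspose_conjTranspose]
  simp only [Matrix.mul_add, Matrix.add_mul, Matrix.mul_sub, Matrix.sub_mul,
    smul_add, smul_sub, add_smul, Matrix.mul_smul, Matrix.smul_mul,
    Matrix.mul_assoc, Matrix.mul_one, Matrix.one_mul, neg_add, neg_sub,
    smul_neg, neg_neg, hGH, hHG, hXA, hAY]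
  abel
end

section
/- Let (A, B, C, D) be complex matrices of sizes N×N, N×n, n×N, n×n and let H ∈ ℂ^{N×N} be Hermitian with Q = HA + A^*H, S = HB + C^*, R = D + D^*. Then for φ(x) = D + C(xI-A)⁻¹B and real x, y with resolvents defined, φ(x) + φ(y)^* = (x+y)·[-B^*(yI-A^*)⁻¹H(xI-A)⁻¹B] + [B^*(yI-A^*)⁻¹, I]·[[Q,S],[S^*,R]]·[(xI-A)⁻¹B; I]. -/
open Matrix

/-- With `Q = HA + A^*H`, `S = HB + C^*`, `R = D + D^*` and
`φ(x) = D + C(xI-A)⁻¹B`, for real `x, y` with resolvents defined: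
`φ(x) + φ(y)^* = (x+y)·[-B^*(yI-A^*)⁻¹H(xI-A)⁻¹B]
  + [B^*(yI-A^*)⁻¹, I]·[[Q,S],[S^*,R]]·[(xI-A)⁻¹B; I]`. -/
theorem stmt7 {N n : ℕ}
    (A : Matrix (Fin N) (Fin N) ℂ) (B : Matrix (Fin N) (Fin n) ℂ)
    (C : Matrix (Fin n) (Fin N) ℂ) (D : Matrix (Fin n) (Fin n) ℂ)
    (H : Matrix (Fin N) (Fin N) ℂ) (hH : H.IsHermitian)
    (Q S R : Matrix _ _ ℂ)
    (hQ : Q = H * A + Aᴴ * H) (hS : S = H * B + Cᴴ) (hR : R = D + Dᴴ)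
    (φ : ℝ → Matrix (Fin n) (Fin n) ℂ)
    (hφ : ∀ t : ℝ, φ t = D + C * ((t : ℂ) • (1 : Matrix (Fin N) (Fin N) ℂ) - A)⁻¹ * B)
    (x y : ℝ)
    (hx : IsUnit ((x : ℂ) • (1 : Matrix (Fin N) (Fin N) ℂ) - A))
    (hy : IsUnit ((y : ℂ) • (1 : Matrix (Fin N) (Fin N) ℂ) - Aᴴ)) :
    φ x + (φ y)ᴴ =
      ((x : ℂ) + (y : ℂ)) •
        (-(Bᴴ * ((y : ℂ) • 1 - Aᴴ)⁻¹ * H * ((x : ℂ) • 1 - A)⁻¹ * B)) +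
      (Bᴴ * ((y : ℂ) • 1 - Aᴴ)⁻¹ * Q * (((x : ℂ) • 1 - A)⁻¹ * B) +
       Bᴴ * ((y : ℂ) • 1 - Aᴴ)⁻¹ * S +
       Sᴴ * (((x : ℂ) • 1 - A)⁻¹ * B) + R) := by
  set M : Matrix (Fin N) (Fin N) ℂ := (x : ℂ) • 1 - A with hM
  set W : Matrix (Fin N) (Fin N) ℂ := (y : ℂ) • 1 - Aᴴ with hW
  have hMdet : IsUnit M.det := (Matrix.isUnit_iff_isUnit_det M).mp hx
  have hWdet : IsUnit W.det := (Matrix.isUnit_iff_isUnit_det W).mp hy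
  have hMX : ∀ Z : Matrix (Fin N) (Fin n) ℂ, M * (M⁻¹ * Z) = Z := by
    intro Z; rw [← Matrix.mul_assoc, Matrix.mul_nonsing_inv _ hMdet, Matrix.one_mul]
  have hWX : ∀ Z : Matrix (Fin N) (Fin n) ℂ, W⁻¹ * (W * Z) = Z := by
    intro Z; rw [← Matrix.mul_assoc, Matrix.nonsing_inv_mul _ hWdet, Matrix.one_mul]
  -- conj transpose of the x-resolvent at y
  have hconj : (((y : ℂ) • (1 : Matrix (Fin N) (Fin N) ℂ) - A)⁻¹)ᴴ = W⁻¹ := by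
    rw [Matrix.conjTranspose_nonsing_inv]
    congr 1
    simp [hW, Matrix.conjTranspose_smul, Complex.star_def, Complex.conj_ofReal]
  -- key algebraic identity for Q
  have hQ' : Q = ((x : ℂ) + (y : ℂ)) • H - W * H - H * M := by
    rw [hQ, hM, hW]
    simp [Matrix.sub_mul, Matrix.mul_sub, Matrix.smul_mul, Matrix.mul_smul, add_smul,
      hH.eq]
    abel
  rw [hφ, hφ, hQ', hS, hR]
  simp only [Matrix.conjTranspose_add, Matrix.conjTranspose_mul, hconj,
    Matrix.conjTranspose_conjTranspose, hH.eq]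
  simp only [Matrix.mul_add, Matrix.add_mul, Matrix.mul_sub, Matrix.sub_mul,
    Matrix.smul_mul, Matrix.mul_smul, Matrix.mul_assoc, hMX, hWX]
  module
end

section
/- Suppose (A,B,C,D) are complex matrices of sizes N×N, N×n, n×N, n×n, and H ∈ ℂ^{N×N} is a negative definite Hermitian matrix such that diag(H, I_n)·[[A,B],[C,D]] + [[A,B],[C,D]]^*·diag(H, I_n) ≥ 0. Then the kernel K(x,y) = (φ(x) + φ(y)^*)/(x+y), where φ(x) = D + C(xI-A)⁻¹B, is positive semidefinite on the set of positive real x where xI - A is invertible: for any finitely many points x₁,...,x_M > 0 with x_kI - A invertible and vectors c₁,...,c_M ∈ ℂⁿ, the Hermitian matrix with (k,l) entry c_k^* K(x_k, x_l) c_l is positive semidefinite. -/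
open Matrix
open scoped ComplexOrder

open MeasureTheory

private lemma integral_exp_neg_mul_Ioi' {b : ℝ} (hb : 0 < b) :
    ∫ t in Set.Ioi (0:ℝ), Real.exp (-(b * t)) = b⁻¹ := by
  have h := integral_comp_mul_left_Ioi (fun u => Real.exp (-u)) 0 hb
  simp only [mul_zero] at h
  rw [h, integral_exp_neg_Ioi_zero, smul_eq_mul, mul_one]

private lemma cauchy_sum_nonneg {M : ℕ} (x : Fin M → ℝ) (hx : ∀ k, 0 < x k)
    (a : Fin M → ℂ) :
    0 ≤ ∑ k, ∑ l, ((x k : ℂ) + (x l : ℂ))⁻¹ * ((starRingEnd ℂ) (a k) * a l) := by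
  classical
  set g : Fin M → ℝ → ℂ := fun k t => a k * ((Real.exp (-(x k * t)) : ℝ) : ℂ) with hg
  have hfun : ∀ k l : Fin M, (fun t : ℝ => (starRingEnd ℂ) (g k t) * g l t)
      = fun t : ℝ => ((starRingEnd ℂ) (a k) * a l) *
          ((Real.exp (-((x k + x l) * t)) : ℝ) : ℂ) := by
    intro k l; funext t
    rw [show -((x k + x l) * t) = -(x k * t) + -(x l * t) by ring, Real.exp_add,
      Complex.ofReal_mul]
    simp only [hg, _root_.map_mul, Complex.conj_ofReal]
    ring
  have hint : ∀ k l : Fin M,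
      Integrable (fun t => (starRingEnd ℂ) (g k t) * g l t)
        (volume.restrict (Set.Ioi (0:ℝ))) := by
    intro k l
    rw [hfun k l]
    have hb : (0:ℝ) < x k + x l := add_pos (hx k) (hx l)
    have h1 : IntegrableOn (fun t : ℝ => Real.exp (-((x k + x l) * t))) (Set.Ioi 0) := by
      simpa only [neg_mul] using exp_neg_integrableOn_Ioi 0 hb
    exact (h1.ofReal).const_mul _
  have key : ∀ k l : Fin M, ∫ t in Set.Ioi (0:ℝ), (starRingEnd ℂ) (g k t) * g l t
      = ((x k : ℂ) + (x l : ℂ))⁻¹ * ((starRingEnd ℂ) (a k) * a l) := by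
    intro k l
    have hb : (0:ℝ) < x k + x l := add_pos (hx k) (hx l)
    rw [hfun k l, MeasureTheory.integral_const_mul,
      show (∫ t in Set.Ioi (0:ℝ), ((Real.exp (-((x k + x l) * t)) : ℝ) : ℂ))
          = (((∫ t in Set.Ioi (0:ℝ), Real.exp (-((x k + x l) * t)) : ℝ)) : ℂ) from
        _root_.integral_ofReal,
      integral_exp_neg_mul_Ioi' hb]
    push_cast
    ring
  have h2 : ∑ k, ∑ l, ((x k : ℂ) + (x l : ℂ))⁻¹ * ((starRingEnd ℂ) (a k) * a l)
      = ((∫ t in Set.Ioi (0:ℝ), Complex.normSq (∑ k, g k t) : ℝ) : ℂ) := by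
    rw [show ((∫ t in Set.Ioi (0:ℝ), Complex.normSq (∑ k, g k t) : ℝ) : ℂ)
        = ∫ t in Set.Ioi (0:ℝ), ((Complex.normSq (∑ k, g k t) : ℝ) : ℂ) from
      _root_.integral_ofReal.symm]
    have h3 : ∀ t : ℝ, ((Complex.normSq (∑ k, g k t) : ℝ) : ℂ)
        = ∑ k, ∑ l, (starRingEnd ℂ) (g k t) * g l t := by
      intro t
      rw [Complex.normSq_eq_conj_mul_self, map_sum, Finset.sum_mul_sum]
    calc ∑ k, ∑ l, ((x k : ℂ) + (x l : ℂ))⁻¹ * ((starRingEnd ℂ) (a k) * a l)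
        = ∑ k, ∑ l, ∫ t in Set.Ioi (0:ℝ), (starRingEnd ℂ) (g k t) * g l t := by
          refine Finset.sum_congr rfl fun k _ => Finset.sum_congr rfl fun l _ => (key k l).symm
      _ = ∑ k, ∫ t in Set.Ioi (0:ℝ), ∑ l, (starRingEnd ℂ) (g k t) * g l t := by
          refine Finset.sum_congr rfl fun k _ => ?_
          rw [MeasureTheory.integral_finset_sum _ (fun l _ => hint k l)]
      _ = ∫ t in Set.Ioi (0:ℝ), ∑ k, ∑ l, (starRingEnd ℂ) (g k t) * g l t := by
          rw [MeasureTheory.integral_finset_sum _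
            (fun k _ => integrable_finset_sum _ (fun l _ => hint k l))]
      _ = ∫ t in Set.Ioi (0:ℝ), ((Complex.normSq (∑ k, g k t) : ℝ) : ℂ) := by
          refine integral_congr_ae (Filter.Eventually.of_forall fun t => (h3 t).symm)
  rw [h2, Complex.zero_le_real]
  exact integral_nonneg fun t => Complex.normSq_nonneg _

private lemma gram_cauchy_nonneg {m : Type*} [Fintype m] [DecidableEq m]
    {P : Matrix m m ℂ} (hP : P.PosSemidef)
    {M : ℕ} (x : Fin M → ℝ) (hx : ∀ k, 0 < x k) (u : Fin M → m → ℂ) :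
    0 ≤ ∑ k, ∑ l, ((x k : ℂ) + (x l : ℂ))⁻¹ * (star (u k) ⬝ᵥ P *ᵥ u l) := by
  obtain ⟨F, rfl⟩ : ∃ F : Matrix m m ℂ, P = Fᴴ * F := by
    open scoped MatrixOrder in exact CStarAlgebra.nonneg_iff_eq_star_mul_self.mp hP.nonneg
  have hterm : ∀ k l : Fin M, star (u k) ⬝ᵥ (Fᴴ * F) *ᵥ u l
      = ∑ j, (starRingEnd ℂ) ((F *ᵥ u k) j) * (F *ᵥ u l) j := by
    intro k l
    rw [← Matrix.mulVec_mulVec, Matrix.dotProduct_mulVec, ← Matrix.star_mulVec]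
    simp [dotProduct, RCLike.star_def]
  calc (0:ℂ) ≤ ∑ j, ∑ k, ∑ l, ((x k : ℂ) + (x l : ℂ))⁻¹ *
        ((starRingEnd ℂ) ((F *ᵥ u k) j) * (F *ᵥ u l) j) := by
        refine Finset.sum_nonneg fun j _ => ?_
        exact cauchy_sum_nonneg x hx (fun k => (F *ᵥ u k) j)
    _ = ∑ k, ∑ l, ((x k : ℂ) + (x l : ℂ))⁻¹ * (star (u k) ⬝ᵥ (Fᴴ * F) *ᵥ u l) := by
        simp_rw [hterm, Finset.mul_sum]
        rw [Finset.sum_comm]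
        exact Finset.sum_congr rfl fun k _ => Finset.sum_comm

set_option maxHeartbeats 2000000 in
private lemma quad_expand {M : ℕ} (G : Matrix (Fin M) (Fin M) ℂ) (v : Fin M → ℂ) :
    star v ⬝ᵥ G *ᵥ v = ∑ k, ∑ l, star (v k) * (G k l * v l) := by
  simp [dotProduct, Matrix.mulVec, Finset.mul_sum, mul_assoc]


set_option maxHeartbeats 2000000 in
/-- If `H` is negative definite Hermitian and satisfies the positive real lemma
inequality for `(A,B,C,D)`, then the kernel `K(x,y) = (φ(x) + φ(y)^*)/(x+y)`,
with `φ(x) = D + C(xI-A)⁻¹B`, is positive semidefinite on the positive reals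
where the resolvent exists: every Gram matrix built from such points is
positive semidefinite. -/
theorem stmt8 {N n : ℕ}
    (A : Matrix (Fin N) (Fin N) ℂ) (B : Matrix (Fin N) (Fin n) ℂ)
    (C : Matrix (Fin n) (Fin N) ℂ) (D : Matrix (Fin n) (Fin n) ℂ)
    (H : Matrix (Fin N) (Fin N) ℂ) (hH : H.IsHermitian) (hHneg : (-H).PosDef)
    (h : ((Matrix.fromBlocks H 0 0 (1 : Matrix (Fin n) (Fin n) ℂ)) *
          (Matrix.fromBlocks A B C D) +
          (Matrix.fromBlocks A B C D)ᴴ *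
          (Matrix.fromBlocks H 0 0 1)).PosSemidef)
    (φ : ℝ → Matrix (Fin n) (Fin n) ℂ)
    (hφ : ∀ t : ℝ, φ t = D + C * ((t : ℂ) • (1 : Matrix (Fin N) (Fin N) ℂ) - A)⁻¹ * B) :
    ∀ (M : ℕ) (x : Fin M → ℝ) (c : Fin M → Fin n → ℂ),
      (∀ k, 0 < x k) →
      (∀ k, IsUnit ((x k : ℂ) • (1 : Matrix (Fin N) (Fin N) ℂ) - A)) →
      (Matrix.of fun k l : Fin M =>
        star (c k) ⬝ᵥ ((((x k : ℂ) + (x l : ℂ))⁻¹ • (φ (x k) + (φ (x l))ᴴ)) *ᵥ c l)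
        : Matrix (Fin M) (Fin M) ℂ).PosSemidef := by
  intro M x c hx hu
  classical
  -- invertibility of H
  have hHu : IsUnit H := by simpa using hHneg.isUnit.neg
  have hHdet : IsUnit H.det := (Matrix.isUnit_iff_isUnit_det H).mp hHu
  have hHH : H * H⁻¹ = 1 := Matrix.mul_nonsing_inv _ hHdet
  have hHH' : H⁻¹ * H = 1 := Matrix.nonsing_inv_mul _ hHdet
  have hHinv : (H⁻¹)ᴴ = H⁻¹ := hH.inv
  set Hn : Matrix (Fin N) (Fin N) ℂ := -H⁻¹ with hHndef
  have hHnPD : Hn.PosDef := by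
    have h1 : (-H)⁻¹ = -H⁻¹ := by
      apply Matrix.inv_eq_right_inv
      rw [neg_mul_neg, hHH]
    rw [hHndef, ← h1]
    exact hHneg.inv
  set X : Matrix (Fin N) (Fin N) ℂ := A * H⁻¹ + H⁻¹ * Aᴴ with hX
  set Y : Matrix (Fin N) (Fin n) ℂ := B + H⁻¹ * Cᴴ with hY
  set Rm : Matrix (Fin n) (Fin n) ℂ := D + Dᴴ with hRm
  -- the transformed block matrix is PSD
  have hPt : (Matrix.fromBlocks X Y Yᴴ Rm).PosSemidef := by
    have h2 := h.mul_mul_conjTranspose_same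
      (Matrix.fromBlocks H⁻¹ 0 0 (1 : Matrix (Fin n) (Fin n) ℂ))
    have hE3 : (Matrix.fromBlocks H 0 0 (1 : Matrix (Fin n) (Fin n) ℂ)) *
        (Matrix.fromBlocks A B C D) +
        (Matrix.fromBlocks A B C D)ᴴ * (Matrix.fromBlocks H 0 0 1)
        = Matrix.fromBlocks (H*A + Aᴴ*H) (H*B + Cᴴ) (C + Bᴴ*H) (D + Dᴴ) := by
      simp [Matrix.fromBlocks_conjTranspose, Matrix.fromBlocks_multiply,
        Matrix.fromBlocks_add]
    have hEH : (Matrix.fromBlocks H⁻¹ 0 0 (1 : Matrix (Fin n) (Fin n) ℂ))ᴴ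
        = Matrix.fromBlocks H⁻¹ 0 0 1 := by
      simp [Matrix.fromBlocks_conjTranspose, hHinv]
    rw [hE3, hEH] at h2
    have hblock : Matrix.fromBlocks H⁻¹ 0 0 (1 : Matrix (Fin n) (Fin n) ℂ) *
        Matrix.fromBlocks (H*A + Aᴴ*H) (H*B + Cᴴ) (C + Bᴴ*H) (D + Dᴴ) *
        Matrix.fromBlocks H⁻¹ 0 0 1
        = Matrix.fromBlocks (H⁻¹ * (H*A + Aᴴ*H) * H⁻¹) (H⁻¹ * (H*B + Cᴴ))
            ((C + Bᴴ*H) * H⁻¹) (D + Dᴴ) := by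
      simp [Matrix.fromBlocks_multiply]
    rw [hblock] at h2
    have b1 : H⁻¹ * (H*A + Aᴴ*H) * H⁻¹ = X := by
      have e : H⁻¹ * (H*A + Aᴴ*H) * H⁻¹ = (H⁻¹*H)*(A*H⁻¹) + (H⁻¹*Aᴴ)*(H*H⁻¹) := by
        noncomm_ring
      rw [e, hHH, hHH', one_mul, mul_one, hX]
    have b2 : H⁻¹ * (H*B + Cᴴ) = Y := by
      rw [Matrix.mul_add, ← Matrix.mul_assoc, hHH', Matrix.one_mul, hY]
    have b3 : (C + Bᴴ*H) * H⁻¹ = Yᴴ := by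
      rw [Matrix.add_mul, Matrix.mul_assoc, hHH, Matrix.mul_one, hY,
        conjTranspose_add, conjTranspose_mul, conjTranspose_conjTranspose, hHinv]
      exact add_comm _ _
    rw [b1, b2, b3, ← hRm] at h2
    exact h2
  -- resolvents
  have hdet : ∀ k, IsUnit ((x k:ℂ) • (1:Matrix (Fin N) (Fin N) ℂ) - A).det :=
    fun k => (Matrix.isUnit_iff_isUnit_det _).mp (hu k)
  set g : Fin M → Matrix (Fin N) (Fin N) ℂ := fun k => ((x k:ℂ) • 1 - A)⁻¹ with hg
  have hge : ∀ k, g k * ((x k:ℂ) • 1 - A) = 1 := fun k => Matrix.nonsing_inv_mul _ (hdet k)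
  have heg : ∀ k, ((x k:ℂ) • 1 - A) * g k = 1 := fun k => Matrix.mul_nonsing_inv _ (hdet k)
  have hekH : ∀ k, ((x k:ℂ) • (1:Matrix (Fin N) (Fin N) ℂ) - A)ᴴ = (x k:ℂ) • 1 - Aᴴ := by
    intro k
    rw [conjTranspose_sub, Matrix.conjTranspose_smul, Matrix.conjTranspose_one]
    congr 1
    rw [Complex.star_def, Complex.conj_ofReal]
  have hgeH : ∀ k, ((x k:ℂ) • (1:Matrix (Fin N) (Fin N) ℂ) - Aᴴ) * (g k)ᴴ = 1 := by
    intro k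
    rw [← hekH k, ← conjTranspose_mul, hge k, Matrix.conjTranspose_one]
  have hφg : ∀ k, φ (x k) = D + C * g k * B := by
    intro k; rw [hφ]
  -- the key matrix identity
  have hkey : ∀ k l, φ (x k) + (φ (x l))ᴴ
      = C * g k * X * (C * g l)ᴴ + C * g k * Y + Yᴴ * (C * g l)ᴴ + Rm
        + ((x k : ℂ) + (x l : ℂ)) • (C * g k * Hn * (C * g l)ᴴ) := by
    intro k l
    have hsub : ((x k:ℂ) • (1:Matrix (Fin N) (Fin N) ℂ) - A) * H⁻¹
        + H⁻¹ * ((x l:ℂ) • 1 - Aᴴ) + X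
        = ((x k : ℂ) + (x l : ℂ)) • H⁻¹ := by
      rw [hX, Matrix.sub_mul, Matrix.mul_sub, smul_mul_assoc, Matrix.one_mul,
        mul_smul_comm, Matrix.mul_one, add_smul]
      abel
    have col1 : ∀ Z : Matrix (Fin N) (Fin n) ℂ,
        g k * (((x k:ℂ) • (1:Matrix (Fin N) (Fin N) ℂ) - A) * Z) = Z := by
      intro Z; rw [← Matrix.mul_assoc, hge k, Matrix.one_mul]
    have col2 : ((x l:ℂ) • (1:Matrix (Fin N) (Fin N) ℂ) - Aᴴ) * ((g l)ᴴ * Cᴴ) = Cᴴ := by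
      rw [← Matrix.mul_assoc, hgeH l, Matrix.one_mul]
    have hsand : ((x k : ℂ) + (x l : ℂ)) • (C * g k * H⁻¹ * (C * g l)ᴴ)
        = C * (g k * (X * ((g l)ᴴ * Cᴴ))) + C * (H⁻¹ * ((g l)ᴴ * Cᴴ))
          + C * (g k * (H⁻¹ * Cᴴ)) := by
      calc ((x k : ℂ) + (x l : ℂ)) • (C * g k * H⁻¹ * (C * g l)ᴴ)
          = C * (g k * ((((x k:ℂ) + (x l:ℂ)) • H⁻¹) * ((g l)ᴴ * Cᴴ))) := by
            rw [conjTranspose_mul]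
            simp only [Matrix.smul_mul, Matrix.mul_smul, Matrix.mul_assoc]
        _ = C * (g k * ((((x k:ℂ) • (1:Matrix (Fin N) (Fin N) ℂ) - A) * H⁻¹
              + H⁻¹ * ((x l:ℂ) • 1 - Aᴴ) + X) * ((g l)ᴴ * Cᴴ))) := by rw [hsub]
        _ = C * (g k * (((x k:ℂ) • (1:Matrix (Fin N) (Fin N) ℂ) - A) * (H⁻¹ * ((g l)ᴴ * Cᴴ))))
            + C * (g k * (H⁻¹ * (((x l:ℂ) • 1 - Aᴴ) * ((g l)ᴴ * Cᴴ))))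
            + C * (g k * (X * ((g l)ᴴ * Cᴴ))) := by
            simp only [Matrix.add_mul, Matrix.mul_add, Matrix.mul_assoc]
        _ = C * (H⁻¹ * ((g l)ᴴ * Cᴴ)) + C * (g k * (H⁻¹ * Cᴴ))
            + C * (g k * (X * ((g l)ᴴ * Cᴴ))) := by rw [col1, col2]
        _ = _ := by abel
    have hHnExp : ((x k : ℂ) + (x l : ℂ)) • (C * g k * Hn * (C * g l)ᴴ)
        = -(((x k : ℂ) + (x l : ℂ)) • (C * g k * H⁻¹ * (C * g l)ᴴ)) := by
      simp [hHndef]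
    rw [hφg k, hφg l, hHnExp, hsand, hY, hRm]
    simp only [conjTranspose_add, conjTranspose_mul, conjTranspose_conjTranspose, hHinv,
      Matrix.mul_add, Matrix.add_mul, Matrix.mul_assoc]
    abel
  rw [Matrix.posSemidef_iff_dotProduct_mulVec]
  constructor
  · -- Hermitian
    show _ᴴ = _
    ext k l
    simp only [Matrix.conjTranspose_apply, Matrix.of_apply]
    rw [Matrix.star_dotProduct, star_star, Matrix.star_mulVec, ← Matrix.dotProduct_mulVec]
    congr 2
    rw [Matrix.conjTranspose_smul, conjTranspose_add, conjTranspose_conjTranspose]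
    rw [show star (((x l : ℂ) + (x k : ℂ))⁻¹) = ((x k : ℂ) + (x l : ℂ))⁻¹ from by
      rw [star_inv₀]
      simp [Complex.star_def, map_add, Complex.conj_ofReal, add_comm]]
    rw [add_comm ((φ (x l))ᴴ) (φ (x k))]
  · -- quadratic form
    intro v
    set z : Fin M → Fin n → ℂ := fun k => v k • c k with hz
    set p : Fin M → Fin N → ℂ := fun k => (C * g k)ᴴ *ᵥ z k with hp
    set u : Fin M → (Fin N ⊕ Fin n) → ℂ := fun k => Sum.elim (p k) (z k) with hudef
    have hterm : ∀ k l, star (v k) *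
        ((star (c k) ⬝ᵥ ((((x k:ℂ)+(x l:ℂ))⁻¹ • (φ (x k) + (φ (x l))ᴴ)) *ᵥ c l)) * v l)
        = ((x k:ℂ)+(x l:ℂ))⁻¹ *
            (star (u k) ⬝ᵥ (Matrix.fromBlocks X Y Yᴴ Rm) *ᵥ u l)
          + star (p k) ⬝ᵥ (Hn *ᵥ p l) := by
      intro k l
      have hinv : ((x k:ℂ)+(x l:ℂ)) ≠ 0 := by
        have h0 : ((x k:ℂ)+(x l:ℂ)) = ((x k + x l : ℝ) : ℂ) := by push_cast; ring
        rw [h0]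
        exact Complex.ofReal_ne_zero.mpr (add_pos (hx k) (hx l)).ne'
      have s1 : star (v k) *
          ((star (c k) ⬝ᵥ ((((x k:ℂ)+(x l:ℂ))⁻¹ • (φ (x k) + (φ (x l))ᴴ)) *ᵥ c l)) * v l)
          = star (z k) ⬝ᵥ ((((x k:ℂ)+(x l:ℂ))⁻¹ • (φ (x k) + (φ (x l))ᴴ)) *ᵥ z l) := by
        simp only [hz, star_smul, smul_dotProduct, Matrix.mulVec_smul,
          dotProduct_smul, smul_eq_mul, Complex.star_def]
        ring
      rw [s1, hkey k l, smul_add, smul_smul, inv_mul_cancel₀ hinv, one_smul,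
        Matrix.add_mulVec, dotProduct_add, Matrix.smul_mulVec,
        dotProduct_smul, smul_eq_mul]
      congr 1
      · congr 1
        simp only [hudef]
        rw [show star (Sum.elim (p k) (z k)) = Sum.elim (star (p k)) (star (z k)) from
          funext fun i => by cases i <;> rfl]
        rw [Matrix.fromBlocks_mulVec, sumElim_dotProduct_sumElim]
        simp only [hp, Matrix.star_mulVec, conjTranspose_conjTranspose,
          Matrix.add_mulVec, dotProduct_add, Matrix.mulVec_mulVec,
          Matrix.dotProduct_mulVec, Matrix.vecMul_vecMul, Matrix.mul_assoc,
          Sum.elim_comp_inl, Sum.elim_comp_inr]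
        abel
      · simp only [hp, Matrix.star_mulVec, conjTranspose_conjTranspose,
          Matrix.mulVec_mulVec, Matrix.dotProduct_mulVec, Matrix.vecMul_vecMul,
          Matrix.mul_assoc]
    rw [quad_expand]
    simp only [Matrix.of_apply]
    calc (0:ℂ) ≤ (∑ k, ∑ l, ((x k:ℂ)+(x l:ℂ))⁻¹ *
            (star (u k) ⬝ᵥ (Matrix.fromBlocks X Y Yᴴ Rm) *ᵥ u l))
          + ∑ k, ∑ l, star (p k) ⬝ᵥ (Hn *ᵥ p l) := by
          apply add_nonneg
          · exact gram_cauchy_nonneg hPt x hx u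
          · have h1 : Hn *ᵥ (∑ k, p k) = ∑ k, Hn *ᵥ p k := by
              rw [← Matrix.mulVecLin_apply, map_sum]
              simp only [Matrix.mulVecLin_apply]
            have h2 : ∀ (a b : Fin M → Fin N → ℂ),
                (∑ k, a k) ⬝ᵥ (∑ l, b l) = ∑ k, ∑ l, a k ⬝ᵥ b l := by
              intro a b
              simp only [dotProduct, Finset.sum_apply, Finset.sum_mul_sum]
              rw [Finset.sum_comm]
              exact Finset.sum_congr rfl fun k _ => Finset.sum_comm
            have hps : ∑ k, ∑ l, star (p k) ⬝ᵥ (Hn *ᵥ p l)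
                = star (∑ k, p k) ⬝ᵥ (Hn *ᵥ (∑ k, p k)) := by
              rw [star_sum, h1, h2]
            rw [hps]
            exact hHnPD.posSemidef.dotProduct_mulVec_nonneg _
      _ = ∑ k, ∑ l, star (v k) *
            ((star (c k) ⬝ᵥ ((((x k:ℂ)+(x l:ℂ))⁻¹ • (φ (x k) + (φ (x l))ᴴ)) *ᵥ c l)) * v l) := by
          rw [← Finset.sum_add_distrib]
          refine Finset.sum_congr rfl fun k _ => ?_
          rw [← Finset.sum_add_distrib]
          exact Finset.sum_congr rfl fun l _ => (hterm k l).symm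
end

section
/- Let (C, A, B) ∈ ℍ^{n×N} × ℍ^{N×N} × ℍ^{N×m} be quaternionic matrices. The pair (C, A) is observable (i.e. the intersection over t ≥ 0 of ker(C Aᵗ) is {0}) if and only if the pair (χ(C), χ(A)) of complex matrices is observable; similarly (A, B) is controllable (intersection of ker(B^* A^{*t}) is {0}) iff (χ(A), χ(B)) is controllable; hence the triple (C, A, B) is minimal iff (χ(C), χ(A), χ(B)) is minimal. -/
open Matrix

lemma qc1_add (a b : Quaternion ℝ) : qc1 (a + b) = qc1 a + qc1 b := by
  simp [qc1, Complex.ext_iff]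
lemma qc2_add (a b : Quaternion ℝ) : qc2 (a + b) = qc2 a + qc2 b := by
  simp [qc2, Complex.ext_iff]
lemma qc1_zero : qc1 0 = 0 := by simp [qc1, Complex.ext_iff, Quaternion.re_zero, Quaternion.imI_zero, Quaternion.imJ_zero, Quaternion.imK_zero]
lemma qc2_zero : qc2 0 = 0 := by simp [qc2, Complex.ext_iff, Quaternion.re_zero, Quaternion.imI_zero, Quaternion.imJ_zero, Quaternion.imK_zero]
lemma qc1_one : qc1 1 = 1 := by simp [qc1, Complex.ext_iff, Quaternion.re_one, Quaternion.imI_one, Quaternion.imJ_one, Quaternion.imK_one]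
lemma qc2_one : qc2 1 = 0 := by simp [qc2, Complex.ext_iff, Quaternion.re_one, Quaternion.imI_one, Quaternion.imJ_one, Quaternion.imK_one]
lemma qc1_mul (a b : Quaternion ℝ) :
    qc1 (a * b) = qc1 a * qc1 b - qc2 a * (starRingEnd ℂ) (qc2 b) := by
  simp [qc1, qc2, Complex.ext_iff, Quaternion.re_mul, Quaternion.imI_mul,
    Complex.mul_re, Complex.mul_im]
  constructor <;> ring
lemma qc2_mul (a b : Quaternion ℝ) :
    qc2 (a * b) = qc1 a * qc2 b + qc2 a * (starRingEnd ℂ) (qc1 b) := by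
  simp [qc1, qc2, Complex.ext_iff, Quaternion.imJ_mul, Quaternion.imK_mul,
    Complex.mul_re, Complex.mul_im]
  constructor <;> ring
lemma qc1_star (a : Quaternion ℝ) : qc1 (star a) = (starRingEnd ℂ) (qc1 a) := by
  simp [qc1, Complex.ext_iff]
lemma qc2_star (a : Quaternion ℝ) : qc2 (star a) = -(qc2 a) := by
  simp [qc2, Complex.ext_iff]
lemma qc_eq_zero {a : Quaternion ℝ} (h1 : qc1 a = 0) (h2 : qc2 a = 0) : a = 0 := by
  simp [qc1, qc2, Complex.ext_iff] at h1 h2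
  ext <;> simp [h1.1, h1.2, h2.1, h2.2, Quaternion.re_zero, Quaternion.imI_zero, Quaternion.imJ_zero, Quaternion.imK_zero]

noncomputable def qc1Hom : Quaternion ℝ →+ ℂ :=
  { toFun := qc1, map_zero' := qc1_zero, map_add' := qc1_add }
noncomputable def qc2Hom : Quaternion ℝ →+ ℂ :=
  { toFun := qc2, map_zero' := qc2_zero, map_add' := qc2_add }

lemma qc1_sum {α : Type*} (s : Finset α) (f : α → Quaternion ℝ) :
    qc1 (∑ i ∈ s, f i) = ∑ i ∈ s, qc1 (f i) := map_sum qc1Hom f s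
lemma qc2_sum {α : Type*} (s : Finset α) (f : α → Quaternion ℝ) :
    qc2 (∑ i ∈ s, f i) = ∑ i ∈ s, qc2 (f i) := map_sum qc2Hom f s

noncomputable def toC {q : Type*} (v : q → Quaternion ℝ) : q ⊕ q → ℂ :=
  Sum.elim (fun i => qc1 (v i)) (fun i => -((starRingEnd ℂ) (qc2 (v i))))

lemma toC_zero {q : Type*} : toC (0 : q → Quaternion ℝ) = 0 := by
  funext x; cases x <;> simp [toC, qc1_zero, qc2_zero]

lemma toC_inj {q : Type*} {v v' : q → Quaternion ℝ} (h : toC v = toC v') : v = v' := by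
  funext i
  have h1 := congrFun h (Sum.inl i)
  have h2 := congrFun h (Sum.inr i)
  simp [toC] at h1 h2
  have h2' : qc2 (v i) = qc2 (v' i) := (starRingEnd ℂ).injective h2
  simp [qc1, qc2, Complex.ext_iff] at h1 h2'
  ext <;> simp [h1.1, h1.2, h2'.1, h2'.2]

lemma chiM_mulVec {p q : Type*} [Fintype q] (M : Matrix p q (Quaternion ℝ))
    (v : q → Quaternion ℝ) : chiM M *ᵥ toC v = toC (M *ᵥ v) := by
  funext x
  cases x with
  | inl i =>
      simp [chiM, toC, mulVec, dotProduct, Fintype.sum_sum_type, qc1_sum, qc1_mul,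
        Finset.sum_sub_distrib, mul_comm, sub_eq_add_neg, Finset.sum_add_distrib]
  | inr i =>
      simp [chiM, toC, mulVec, dotProduct, Fintype.sum_sum_type, qc2_sum, qc2_mul,
        Finset.sum_add_distrib, map_sum, mul_comm]

noncomputable def fromC {q : Type*} (w : q ⊕ q → ℂ) : q → Quaternion ℝ :=
  fun i => ⟨(w (Sum.inl i)).re, (w (Sum.inl i)).im, -(w (Sum.inr i)).re, (w (Sum.inr i)).im⟩

lemma toC_fromC {q : Type*} (w : q ⊕ q → ℂ) : toC (fromC w) = w := by
  funext x
  cases x <;> simp [toC, fromC, qc1, qc2, Complex.ext_iff]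

lemma chiM_mul {p q r : Type*} [Fintype q] [Fintype r] [DecidableEq r]
    (M : Matrix p q (Quaternion ℝ)) (P : Matrix q r (Quaternion ℝ)) :
    chiM (M * P) = chiM M * chiM P := by
  have key : ∀ w : r ⊕ r → ℂ, chiM (M * P) *ᵥ w = (chiM M * chiM P) *ᵥ w := by
    intro w
    rw [← toC_fromC w, chiM_mulVec, ← mulVec_mulVec, ← chiM_mulVec M,
      ← chiM_mulVec P, mulVec_mulVec]
  ext i j
  have := key (Pi.single j 1)
  have h1 := congrFun this i
  simpa [mulVec_single] using h1

lemma chiM_one {q : Type*} [Fintype q] [DecidableEq q] :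
    chiM (1 : Matrix q q (Quaternion ℝ)) = 1 := by
  have h1 : (1 : Matrix q q (Quaternion ℝ)).map qc1 = 1 :=
    Matrix.map_one qc1 qc1_zero qc1_one
  have h2 : (1 : Matrix q q (Quaternion ℝ)).map qc2 = 0 := by
    ext i j
    by_cases h : i = j <;> simp [Matrix.one_apply, h, qc2_zero, qc2_one]
  simp [chiM, h1, h2, Matrix.fromBlocks_one]

lemma chiM_pow {q : Type*} [Fintype q] [DecidableEq q]
    (A : Matrix q q (Quaternion ℝ)) (t : ℕ) : chiM (A ^ t) = chiM A ^ t := by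
  induction t with
  | zero => simp [chiM_one]
  | succ k ih => rw [pow_succ, pow_succ, chiM_mul, ih]

lemma chiM_conjTranspose {p q : Type*} (M : Matrix p q (Quaternion ℝ)) :
    chiM (Mᴴ) = (chiM M)ᴴ := by
  ext i j
  cases i <;> cases j <;>
    simp [chiM, conjTranspose_apply, qc1_star, qc2_star, Complex.ext_iff]

lemma key_iff {p q : Type*} [Fintype q] (F : ℕ → Matrix p q (Quaternion ℝ)) :
    (∀ v : q → Quaternion ℝ, (∀ t : ℕ, F t *ᵥ v = 0) → v = 0) ↔
    (∀ w : q ⊕ q → ℂ, (∀ t : ℕ, chiM (F t) *ᵥ w = 0) → w = 0) := by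
  constructor
  · intro H w hw
    rw [← toC_fromC w]
    rw [← toC_fromC w] at hw
    have : fromC w = 0 := by
      apply H
      intro t
      apply toC_inj
      rw [← chiM_mulVec, hw t, toC_zero]
    rw [this, toC_zero]
  · intro H v hv
    have : toC v = 0 := by
      apply H
      intro t
      rw [chiM_mulVec, hv t, toC_zero]
    apply toC_inj
    rw [this, toC_zero]

/-- `(C, A)` is observable iff `(χ(C), χ(A))` is observable; `(A, B)` is
controllable iff `(χ(A), χ(B))` is controllable; hence `(C, A, B)` is minimal
iff `(χ(C), χ(A), χ(B))` is minimal. -/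
theorem stmt18 {n N m : ℕ}
    (C : Matrix (Fin n) (Fin N) (Quaternion ℝ))
    (A : Matrix (Fin N) (Fin N) (Quaternion ℝ))
    (B : Matrix (Fin N) (Fin m) (Quaternion ℝ)) :
    ((∀ v : Fin N → Quaternion ℝ, (∀ t : ℕ, (C * A ^ t) *ᵥ v = 0) → v = 0) ↔
      (∀ w : Fin N ⊕ Fin N → ℂ,
        (∀ t : ℕ, (chiM C * (chiM A) ^ t) *ᵥ w = 0) → w = 0)) ∧
    ((∀ v : Fin N → Quaternion ℝ, (∀ t : ℕ, (Bᴴ * (Aᴴ) ^ t) *ᵥ v = 0) → v = 0) ↔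
      (∀ w : Fin N ⊕ Fin N → ℂ,
        (∀ t : ℕ, ((chiM B)ᴴ * ((chiM A)ᴴ) ^ t) *ᵥ w = 0) → w = 0)) ∧
    (((∀ v : Fin N → Quaternion ℝ, (∀ t : ℕ, (C * A ^ t) *ᵥ v = 0) → v = 0) ∧
      (∀ v : Fin N → Quaternion ℝ, (∀ t : ℕ, (Bᴴ * (Aᴴ) ^ t) *ᵥ v = 0) → v = 0)) ↔
     ((∀ w : Fin N ⊕ Fin N → ℂ,
        (∀ t : ℕ, (chiM C * (chiM A) ^ t) *ᵥ w = 0) → w = 0) ∧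
      (∀ w : Fin N ⊕ Fin N → ℂ,
        (∀ t : ℕ, ((chiM B)ᴴ * ((chiM A)ᴴ) ^ t) *ᵥ w = 0) → w = 0))) := by
  have hobs : (∀ v : Fin N → Quaternion ℝ, (∀ t : ℕ, (C * A ^ t) *ᵥ v = 0) → v = 0) ↔
      (∀ w : Fin N ⊕ Fin N → ℂ,
        (∀ t : ℕ, (chiM C * (chiM A) ^ t) *ᵥ w = 0) → w = 0) := by
    have := key_iff (fun t => C * A ^ t)
    simpa [chiM_mul, chiM_pow] using this
  have hcon : (∀ v : Fin N → Quaternion ℝ, (∀ t : ℕ, (Bᴴ * (Aᴴ) ^ t) *ᵥ v = 0) → v = 0) ↔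
      (∀ w : Fin N ⊕ Fin N → ℂ,
        (∀ t : ℕ, ((chiM B)ᴴ * ((chiM A)ᴴ) ^ t) *ᵥ w = 0) → w = 0) := by
    have := key_iff (fun t => Bᴴ * (Aᴴ) ^ t)
    simpa [chiM_mul, chiM_pow, chiM_conjTranspose] using this
  exact ⟨hobs, hcon, and_congr hobs hcon⟩
end
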